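/- Let E denote the inner product space of functions Fin 11 → ℝ³, let Υ : E → E be a symmetric linear map, let κ > 0, let p : Fin 11 → ℝ³ have heights a i := ⟨p i, e₃⟩ ≥ 0, let F : ℝ → E be continuous, and let U : ℝ → E be twice differentiable with U''(t) + Υ(U(t)) + κ⁻¹ N_pt(U(t)) = F(t) for all t ∈ [0,T]. Then the energy 𝓔(t) := (1/2)‖U'(t)‖² + (1/2)⟨Υ(U(t)), U(t)⟩ + (2κ)⁻¹ Σ_i ((a i + ⟨U(t) i, e₃⟩)⁻)² is differentiable on [0,T] with 𝓔'(t) = ⟨F(t), U'(t)⟩. -/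

import Mathlib

open MeasureTheory
open scoped RealInnerProductSpace BigOperators

lemma negpart_sq_hasDerivAt (x : ℝ) :
    HasDerivAt (fun y : ℝ => (max (-y) 0) ^ 2) (-2 * max (-x) 0) x := by
  rcases lt_trichotomy x 0 with hx | hx | hx
  · have h : HasDerivAt (fun y : ℝ => y ^ 2) (2 * x) x := by
      simpa using hasDerivAt_pow 2 x
    have heq : (fun y : ℝ => (max (-y) 0) ^ 2) =ᶠ[nhds x] fun y => y ^ 2 := by
      filter_upwards [Iio_mem_nhds hx] with y (hy : y < 0)
      rw [max_eq_left (by linarith : (0:ℝ) ≤ -y)]; ring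
    have h2 := h.congr_of_eventuallyEq heq
    have : -2 * max (-x) 0 = 2 * x := by
      rw [max_eq_left (by linarith : (0:ℝ) ≤ -x)]; ring
    rwa [this]
  · subst hx
    rw [hasDerivAt_iff_tendsto_slope]
    have hzero : -2 * max (-(0:ℝ)) 0 = 0 := by simp
    rw [hzero]
    refine squeeze_zero_norm (a := fun y : ℝ => ‖y‖) (fun y => ?_) ?_
    · show ‖slope (fun y : ℝ => max (-y) 0 ^ 2) 0 y‖ ≤ ‖y‖
      rcases eq_or_ne y 0 with rfl | hy
      · simp [slope]
      · rw [slope_def_field]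
        have hm : max (-y) 0 ≤ |y| := max_le (neg_le_abs y) (abs_nonneg y)
        have hm0 : (0:ℝ) ≤ max (-y) 0 := le_max_right _ _
        have hsq : (max (-y) 0) ^ 2 ≤ y ^ 2 := by
          have := mul_self_le_mul_self hm0 hm
          simpa [pow_two, sq_abs] using this
        have hys : (max (-(0:ℝ)) 0) ^ 2 = 0 := by simp
        rw [hys, sub_zero, sub_zero, norm_div, Real.norm_eq_abs, Real.norm_eq_abs]
        rw [div_le_iff₀ (abs_pos.mpr hy)]
        calc |max (-y) 0 ^ 2| = max (-y) 0 ^ 2 := abs_of_nonneg (by positivity)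
          _ ≤ y ^ 2 := hsq
          _ = |y| * |y| := by rw [← sq_abs]; ring
    · have : Filter.Tendsto (fun y : ℝ => ‖y‖) (nhds 0) (nhds 0) := by
        simpa using continuous_norm.tendsto (0:ℝ)
      exact this.mono_left nhdsWithin_le_nhds
  · have heq : (fun y : ℝ => (max (-y) 0) ^ 2) =ᶠ[nhds x] fun _ => (0:ℝ) := by
      filter_upwards [Ioi_mem_nhds hx] with y (hy : 0 < y)
      rw [max_eq_right (by linarith : -y ≤ 0)]; ring
    have h2 := (hasDerivAt_const x (0:ℝ)).congr_of_eventuallyEq heq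
    have : -2 * max (-x) 0 = 0 := by
      rw [max_eq_right (by linarith : -x ≤ 0)]; ring
    rwa [this]

/-- The third standard basis vector `e₃ = (0,0,1)` of `ℝ³`. -/
noncomputable def e3 : EuclideanSpace ℝ (Fin 3) := EuclideanSpace.single 2 1

/-- The finite-dimensional inner product space `E` of displacement arrays
`Fin 11 → ℝ³`, endowed with the Euclidean (ℓ²) inner product. -/
abbrev E : Type := PiLp 2 (fun _ : Fin 11 => EuclideanSpace ℝ (Fin 3))

/-- The pointwise penalty map: `(N_pt u) i = −((a i + ⟨u i, e₃⟩)⁻) • e₃`,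
where `a i = ⟨p i, e₃⟩` and `x⁻ = max (−x) 0`. -/
noncomputable def Npt (p : Fin 11 → EuclideanSpace ℝ (Fin 3)) (u : E) : E :=
  WithLp.toLp 2 (fun i => (-(max (-(⟪p i, e3⟫ + ⟪u i, e3⟫)) 0)) • e3)

set_option synthInstance.maxHeartbeats 0 in
set_option maxHeartbeats 0 in
/-- energy identity for the penalized equation
`U'' + Υ U + κ⁻¹ N_pt(U) = F`: the energy
`𝓔(t) = (1/2)‖U'(t)‖² + (1/2)⟨Υ U(t), U(t)⟩ + (2κ)⁻¹ Σᵢ ((aᵢ + ⟨U(t) i, e₃⟩)⁻)²`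
is differentiable on `[0,T]` with `𝓔'(t) = ⟨F(t), U'(t)⟩`. -/
theorem penalized_energy_identity (T : ℝ) (hT : 0 < T)
    (Υ : E →ₗ[ℝ] E) (hsym : ∀ x y : E, ⟪Υ x, y⟫ = ⟪x, Υ y⟫)
    (κ : ℝ) (hκ : 0 < κ)
    (p : Fin 11 → EuclideanSpace ℝ (Fin 3)) (hp : ∀ i, 0 ≤ ⟪p i, e3⟫)
    (F : ℝ → E) (hF : Continuous F)
    (U U' U'' : ℝ → E)
    (hU : ∀ t : ℝ, HasDerivAt U (U' t) t)
    (hU' : ∀ t : ℝ, HasDerivAt U' (U'' t) t)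
    (heq : ∀ t ∈ Set.Icc (0 : ℝ) T,
      U'' t + Υ (U t) + κ⁻¹ • Npt p (U t) = F t) :
    ∀ t ∈ Set.Icc (0 : ℝ) T,
      HasDerivWithinAt
        (fun s => (1 / 2) * ‖U' s‖ ^ 2 + (1 / 2) * ⟪Υ (U s), U s⟫ +
          (2 * κ)⁻¹ * ∑ i : Fin 11,
            (max (-(⟪p i, e3⟫ + ⟪U s i, e3⟫)) 0) ^ 2)
        (⟪F t, U' t⟫) (Set.Icc 0 T) t := by
  intro t ht
  -- derivative of components of U
  have hcomp : ∀ i, HasDerivAt (fun s => ⟪U s i, e3⟫) ⟪U' t i, e3⟫ t := by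
    intro i
    have h1 : HasDerivAt (fun s => U s i) (U' t i) t :=
      (PiLp.proj (𝕜 := ℝ) (p := 2) (β := fun _ : Fin 11 => EuclideanSpace ℝ (Fin 3))
        i).hasFDerivAt.comp_hasDerivAt t (hU t)
    have := h1.inner ℝ (hasDerivAt_const t e3)
    simpa using this
  -- kinetic term
  have hkin : HasDerivAt (fun s => (1 / 2 : ℝ) * ‖U' s‖ ^ 2) ⟪U'' t, U' t⟫ t := by
    have h := ((hU' t).inner ℝ (hU' t)).const_mul (1 / 2 : ℝ)
    have heqf : (fun s => (1 / 2 : ℝ) * ⟪U' s, U' s⟫) = fun s => (1 / 2 : ℝ) * ‖U' s‖ ^ 2 := by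
      funext s; rw [real_inner_self_eq_norm_sq]
    rw [heqf] at h
    refine h.congr_deriv ?_
    rw [real_inner_comm (U' t) (U'' t)]; ring
  -- elastic term
  have hΥ : HasDerivAt (fun s => Υ (U s)) (Υ (U' t)) t := by
    have := (LinearMap.toContinuousLinearMap Υ).hasFDerivAt.comp_hasDerivAt t (hU t)
    exact this
  have hel : HasDerivAt (fun s => (1 / 2 : ℝ) * ⟪Υ (U s), U s⟫) ⟪Υ (U t), U' t⟫ t := by
    have h := (hΥ.inner ℝ (hU t)).const_mul (1 / 2 : ℝ)
    refine h.congr_deriv ?_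
    rw [hsym (U' t) (U t), real_inner_comm (U' t) (Υ (U t))]
    ring
  -- penalty term
  have hpen : HasDerivAt
      (fun s => (2 * κ)⁻¹ * ∑ i : Fin 11, (max (-(⟪p i, e3⟫ + ⟪U s i, e3⟫)) 0) ^ 2)
      ((2 * κ)⁻¹ * ∑ i : Fin 11,
        (-2 * max (-(⟪p i, e3⟫ + ⟪U t i, e3⟫)) 0) * ⟪U' t i, e3⟫) t := by
    refine HasDerivAt.const_mul _ (HasDerivAt.fun_sum fun i _ => ?_)
    have hin2 : HasDerivAt (fun s => ⟪p i, e3⟫ + ⟪U s i, e3⟫) ⟪U' t i, e3⟫ t := by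
      simpa using (hasDerivAt_const t ⟪p i, e3⟫).fun_add (hcomp i)
    exact (negpart_sq_hasDerivAt (⟪p i, e3⟫ + ⟪U t i, e3⟫)).comp t hin2
  have htot := (hkin.add hel).add hpen
  have hderiv_eq :
      ⟪U'' t, U' t⟫ + ⟪Υ (U t), U' t⟫ +
        (2 * κ)⁻¹ * ∑ i : Fin 11,
          (-2 * max (-(⟪p i, e3⟫ + ⟪U t i, e3⟫)) 0) * ⟪U' t i, e3⟫ = ⟪F t, U' t⟫ := by
    rw [← heq t ht]
    rw [inner_add_left, inner_add_left, real_inner_smul_left]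
    have hNpt : ⟪Npt p (U t), U' t⟫ =
        ∑ i : Fin 11, (-(max (-(⟪p i, e3⟫ + ⟪U t i, e3⟫)) 0)) * ⟪U' t i, e3⟫ := by
      rw [PiLp.inner_apply]
      refine Finset.sum_congr rfl fun i _ => ?_
      rw [show Npt p (U t) i = (-(max (-(⟪p i, e3⟫ + ⟪U t i, e3⟫)) 0)) • e3 from rfl,
        real_inner_smul_left, real_inner_comm e3 (U' t i)]
    rw [hNpt, Finset.mul_sum, Finset.mul_sum]
    have : ∀ i : Fin 11, (2 * κ)⁻¹ * ((-2 * max (-(⟪p i, e3⟫ + ⟪U t i, e3⟫)) 0) * ⟪U' t i, e3⟫)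
        = κ⁻¹ * ((-(max (-(⟪p i, e3⟫ + ⟪U t i, e3⟫)) 0)) * ⟪U' t i, e3⟫) := by
      intro i; field_simp
    rw [Finset.sum_congr rfl fun i _ => this i]
  rw [← hderiv_eq]
  exact htot.hasDerivWithinAt
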